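/- Let W be a Morse sequence on K with reference pair (∧,∨). Then for every p, ∂̂_p ∘ ∧_p = ∧_{p−1} ∘ ∂_p and δ̂_p ∘ ∨_p = ∨_{p+1} ∘ δ_p as linear maps on p-chains; that is, ∧ is a chain map from (K[p], ∂_p) to (Ŵ[p], ∂̂_p) and ∨ is a cochain map from (K[p], δ_p) to (Ŵ[p], δ̂_p). -/

import Mathlib

/-! ## Basic notions: simplicial complexes, collapses, expansions, fillings -/

variable {V : Type*} [DecidableEq V]

/-- A (finite) simplicial complex: a finite collection of nonempty finite sets that is
closed under taking nonempty subsets. -/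
def IsComplex (K : Finset (Finset V)) : Prop :=
  ∀ τ ∈ K, τ.Nonempty ∧ ∀ σ, σ ⊆ τ → σ.Nonempty → σ ∈ K

/-- `ν` is a facet (inclusion-maximal face) of `K`. -/
def IsFacet (K : Finset (Finset V)) (ν : Finset V) : Prop :=
  ν ∈ K ∧ ∀ ρ ∈ K, ν ⊆ ρ → ρ = ν

/-- `(σ, τ)` is a free pair for `K`: `σ ⊊ τ` and `τ` is the only face of `K`
strictly containing `σ`. -/
def IsFreePair (K : Finset (Finset V)) (σ τ : Finset V) : Prop :=
  σ ∈ K ∧ τ ∈ K ∧ σ ⊂ τ ∧ ∀ ρ ∈ K, σ ⊂ ρ → ρ = τ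

/-- `K` is an elementary expansion of `L` (equivalently, `L` is an elementary collapse
of `K`): `L = K \ {σ, τ}` for some free pair `(σ, τ)` of `K`. -/
def ElemExpansion (L K : Finset (Finset V)) : Prop :=
  ∃ σ τ, IsFreePair K σ τ ∧ L = K \ {σ, τ}

/-- `K` is an elementary filling of `L` (equivalently, `L` is an elementary perforation
of `K`): `L = K \ {ν}` for some facet `ν` of `K`. -/
def ElemFilling (L K : Finset (Finset V)) : Prop :=
  ∃ ν, IsFacet K ν ∧ L = K \ {ν}

/-- `L` is an elementary collapse of `K`. -/
def ElemCollapse (K L : Finset (Finset V)) : Prop :=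
  ∃ σ τ, IsFreePair K σ τ ∧ L = K \ {σ, τ}

/-- `K` collapses onto `L`: there is a sequence of elementary collapses from `K` to `L`. -/
def CollapsesOnto (K L : Finset (Finset V)) : Prop :=
  Relation.ReflTransGen ElemCollapse K L

/-! ## Morse sequences -/

/-- A Morse sequence `⟨∅ = K₀, …, K_k = K⟩`: each `K_i` is a simplicial complex that is
an elementary expansion or an elementary filling of `K_{i-1}`. -/
structure MorseSeq (V : Type*) [DecidableEq V] where
  k : ℕ
  seq : ℕ → Finset (Finset V)
  cpx : ∀ i ≤ k, IsComplex (seq i)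
  init : seq 0 = ∅
  step : ∀ i, 1 ≤ i → i ≤ k → ElemExpansion (seq (i - 1)) (seq i) ∨ ElemFilling (seq (i - 1)) (seq i)

/-- The simplicial complex `K = K_k` on which the Morse sequence lives. -/
def MorseSeq.cplx (W : MorseSeq V) : Finset (Finset V) := W.seq W.k

/-- A face added by a filling step: a critical face of `W`. -/
def MorseSeq.Critical (W : MorseSeq V) (ν : Finset V) : Prop :=
  ∃ i, 1 ≤ i ∧ i ≤ W.k ∧ W.seq i \ W.seq (i - 1) = {ν}

/-- `(σ, τ)` is a regular pair for `W`: the two faces are added together by an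
elementary expansion step. -/
def MorseSeq.Regular (W : MorseSeq V) (σ τ : Finset V) : Prop :=
  ∃ i, 1 ≤ i ∧ i ≤ W.k ∧ σ ⊂ τ ∧ W.seq i \ W.seq (i - 1) = {σ, τ}

/-- `σ` is lower regular for `W`. -/
def MorseSeq.LowerRegular (W : MorseSeq V) (σ : Finset V) : Prop := ∃ τ, W.Regular σ τ

/-- `τ` is upper regular for `W`. -/
def MorseSeq.UpperRegular (W : MorseSeq V) (τ : Finset V) : Prop := ∃ σ, W.Regular σ τ

/-! ## Chains modulo 2 -/

/-- The boundary `∂(σ)` of a simplex: the chain of its (nonempty) codimension-one faces. -/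
def bd (σ : Finset V) : Finset (Finset V) :=
  σ.powerset.filter fun ρ => ρ.Nonempty ∧ ρ.card + 1 = σ.card

/-- The coboundary `δ(σ)` of a simplex in `K`: the chain of faces of `K` of
codimension one over `σ` containing `σ`. -/
def cobd (K : Finset (Finset V)) (σ : Finset V) : Finset (Finset V) :=
  K.filter fun τ => σ ⊆ τ ∧ σ.card + 1 = τ.card

/-- Mod-2 linear extension: `chainSum c f` is the sum (symmetric difference) of
the chains `f σ` over `σ ∈ c`; an element belongs to it iff it belongs to an odd
number of the `f σ`. -/
def chainSum (c : Finset (Finset V)) (f : Finset V → Finset (Finset V)) : Finset (Finset V) :=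
  (c.biUnion f).filter fun ν => (c.filter fun σ => ν ∈ f σ).card % 2 = 1

/-- `c` is a `p`-chain of `K`: a set of `p`-simplices of `K`. -/
def IsChainOf (K : Finset (Finset V)) (p : ℕ) (c : Finset (Finset V)) : Prop :=
  ∀ ν ∈ c, ν ∈ K ∧ ν.card = p + 1

/-- `c` is a chain of critical `p`-simplices of `W` (an element of `Ŵ[p]`). -/
def IsCritChain (W : MorseSeq V) (p : ℕ) (c : Finset (Finset V)) : Prop :=
  ∀ ν ∈ c, W.Critical ν ∧ ν.card = p + 1

/-! ## Frames, reference and coreference maps -/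

/-- A frame on `W`: it assigns to each `p`-simplex of `K` a chain of critical
`p`-simplices of `W`. -/
def IsFrame (W : MorseSeq V) (Υ : Finset V → Finset (Finset V)) : Prop :=
  ∀ ν ∈ W.cplx, ∀ μ ∈ Υ ν, W.Critical μ ∧ μ.card = ν.card

/-- `Λ` is the reference map of `W`: a frame with `Λ(ν) = ν` for critical `ν`, and
`Λ(τ) = 0`, `Λ(∂τ) = 0` for upper regular `τ`. -/
def IsRefMap (W : MorseSeq V) (Λ : Finset V → Finset (Finset V)) : Prop :=
  IsFrame W Λ ∧ (∀ ν, W.Critical ν → Λ ν = {ν}) ∧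
    ∀ τ, W.UpperRegular τ → Λ τ = ∅ ∧ chainSum (bd τ) Λ = ∅

/-- `Λ` is the coreference map of `W`: a frame with `Λ(ν) = ν` for critical `ν`, and
`Λ(σ) = 0`, `Λ(δσ) = 0` for lower regular `σ`. -/
def IsCorefMap (W : MorseSeq V) (Λ : Finset V → Finset (Finset V)) : Prop :=
  IsFrame W Λ ∧ (∀ ν, W.Critical ν → Λ ν = {ν}) ∧
    ∀ σ, W.LowerRegular σ → Λ σ = ∅ ∧ chainSum (cobd W.cplx σ) Λ = ∅

/-- The extension map `∧̃` of `W` (defined from the coreference map `Vee`):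
`∧̃(κ) = {ν ∈ K | κ ∈ ∨(ν)}`. -/
def extMap (W : MorseSeq V) (Vee : Finset V → Finset (Finset V)) (κ : Finset V) :
    Finset (Finset V) :=
  W.cplx.filter fun ν => κ ∈ Vee ν

/-- The coextension map `∨̃` of `W` (defined from the reference map `Λ`):
`∨̃(κ) = {ν ∈ K | κ ∈ ∧(ν)}`. -/
def coextMap (W : MorseSeq V) (Λ : Finset V → Finset (Finset V)) (κ : Finset V) :
    Finset (Finset V) :=
  W.cplx.filter fun ν => κ ∈ Λ ν

/-! ## Auxiliary lemmas -/

section ChainSumLemmas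

lemma mem_chainSum {c : Finset (Finset V)} {f : Finset V → Finset (Finset V)} {μ : Finset V} :
    μ ∈ chainSum c f ↔ (c.filter fun σ => μ ∈ f σ).card % 2 = 1 := by
  constructor
  · intro h; exact (Finset.mem_filter.mp h).2
  · intro h
    refine Finset.mem_filter.mpr ⟨?_, h⟩
    have hpos : 0 < (c.filter fun σ => μ ∈ f σ).card := by omega
    obtain ⟨σ, hσ⟩ := Finset.card_pos.mp hpos
    rw [Finset.mem_filter] at hσ
    exact Finset.mem_biUnion.mpr ⟨σ, hσ.1, hσ.2⟩

lemma chainSum_empty (f : Finset V → Finset (Finset V)) :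
    chainSum (∅ : Finset (Finset V)) f = ∅ := by
  simp [chainSum]

lemma chainSum_singleton (σ : Finset V) (f : Finset V → Finset (Finset V)) :
    chainSum ({σ} : Finset (Finset V)) f = f σ := by
  ext μ
  rw [mem_chainSum, Finset.filter_singleton]
  by_cases h : μ ∈ f σ
  · simp [h]
  · simp [h]

lemma chainSum_congr {c : Finset (Finset V)} {f f' : Finset V → Finset (Finset V)}
    (h : ∀ σ ∈ c, f σ = f' σ) : chainSum c f = chainSum c f' := by
  ext μ
  rw [mem_chainSum, mem_chainSum,
    Finset.filter_congr (fun σ hσ => by rw [h σ hσ] : ∀ σ ∈ c, (μ ∈ f σ) ↔ (μ ∈ f' σ))]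

lemma parity_filter {α : Type*} (s : Finset α) (F : α → ℕ) :
    (∑ a ∈ s, F a) % 2 = (s.filter fun a => F a % 2 = 1).card % 2 := by
  classical
  induction s using Finset.induction_on with
  | empty => simp
  | insert a s h ih =>
    rw [Finset.sum_insert h, Finset.filter_insert]
    by_cases hF : F a % 2 = 1
    · rw [if_pos hF, Finset.card_insert_of_notMem (fun hm => h (Finset.mem_filter.mp hm).1)]
      omega
    · rw [if_neg hF]; omega

lemma chainSum_chainSum (c : Finset (Finset V)) (g f : Finset V → Finset (Finset V)) :
    chainSum (chainSum c g) f = chainSum c fun σ => chainSum (g σ) f := by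
  ext μ
  rw [mem_chainSum, mem_chainSum]
  have h1 : (chainSum c g).filter (fun ν => μ ∈ f ν)
      = ((c.biUnion g).filter fun ν => μ ∈ f ν).filter
          (fun ν => (c.filter fun σ => ν ∈ g σ).card % 2 = 1) := by
    rw [chainSum, Finset.filter_filter, Finset.filter_filter]
    exact Finset.filter_congr fun x _ => by tauto
  rw [h1, ← parity_filter]
  have h2 : ∀ ν ∈ (c.biUnion g).filter fun ν => μ ∈ f ν, (c.filter fun σ => ν ∈ g σ).card
      = ∑ σ ∈ c, if ν ∈ g σ then 1 else 0 := fun ν _ => Finset.card_filter _ _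
  rw [Finset.sum_congr rfl h2, Finset.sum_comm]
  have h3 : ∀ σ ∈ c, (∑ ν ∈ (c.biUnion g).filter fun ν => μ ∈ f ν, if ν ∈ g σ then 1 else 0)
      = ((g σ).filter fun ν => μ ∈ f ν).card := by
    intro σ hσ
    rw [← Finset.card_filter]
    congr 1
    ext ν
    simp only [Finset.mem_filter, Finset.mem_biUnion]
    constructor
    · rintro ⟨⟨_, hfν⟩, hgν⟩; exact ⟨hgν, hfν⟩
    · rintro ⟨hgν, hfν⟩; exact ⟨⟨⟨σ, hσ, hgν⟩, hfν⟩, hgν⟩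
  rw [Finset.sum_congr rfl h3, parity_filter]
  have h4 : (c.filter fun σ => ((g σ).filter fun ν => μ ∈ f ν).card % 2 = 1)
      = c.filter fun σ => μ ∈ chainSum (g σ) f :=
    Finset.filter_congr fun σ _ => (mem_chainSum (c := g σ) (f := f) (μ := μ)).symm
  rw [h4]

lemma chainSum_erase {c : Finset (Finset V)} {f : Finset V → Finset (Finset V)} {σ : Finset V}
    (hσ : σ ∈ c) (h : chainSum c f = ∅) : f σ = chainSum (c.erase σ) f := by
  ext μ
  have h0 : (c.filter fun a => μ ∈ f a).card % 2 = 0 := by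
    have : ¬ μ ∈ chainSum c f := by rw [h]; exact Finset.notMem_empty μ
    rw [mem_chainSum] at this; omega
  rw [mem_chainSum, Finset.filter_erase]
  by_cases hμ : μ ∈ f σ
  · have hmem : σ ∈ c.filter fun a => μ ∈ f a := Finset.mem_filter.mpr ⟨hσ, hμ⟩
    rw [Finset.card_erase_of_mem hmem]
    have : 1 ≤ (c.filter fun a => μ ∈ f a).card := Finset.one_le_card.mpr ⟨σ, hmem⟩
    simp only [hμ, true_iff]
    omega
  · have : σ ∉ c.filter fun a => μ ∈ f a := fun hm => hμ (Finset.mem_filter.mp hm).2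
    rw [Finset.erase_eq_of_notMem this]
    simp only [hμ, false_iff]
    omega

lemma mem_bd {ρ τ : Finset V} : ρ ∈ bd τ ↔ ρ ⊆ τ ∧ ρ.Nonempty ∧ ρ.card + 1 = τ.card := by
  simp [bd, Finset.mem_filter, Finset.mem_powerset, and_assoc]

lemma mem_cobd {K : Finset (Finset V)} {σ ρ : Finset V} :
    ρ ∈ cobd K σ ↔ ρ ∈ K ∧ σ ⊆ ρ ∧ σ.card + 1 = ρ.card := by
  simp [cobd, Finset.mem_filter, and_assoc]

/-- The number of sets strictly between `σ` and `μ` (with `σ.card + 2 = μ.card`) is 2. -/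
lemma interval_card {σ μ : Finset V} (hsub : σ ⊆ μ) (hcard : σ.card + 2 = μ.card)
    {S : Finset (Finset V)}
    (hS : ∀ ρ, ρ ∈ S ↔ σ ⊆ ρ ∧ ρ ⊆ μ ∧ σ.card + 1 = ρ.card) : S.card = 2 := by
  have himg : S = (μ \ σ).image (fun x => insert x σ) := by
    ext ρ
    rw [hS, Finset.mem_image]
    constructor
    · rintro ⟨h1, h2, h3⟩
      have hd : (ρ \ σ).card = 1 := by rw [Finset.card_sdiff_of_subset h1]; omega
      obtain ⟨x, hx⟩ := Finset.card_eq_one.mp hd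
      have hxρ : x ∈ ρ \ σ := by rw [hx]; exact Finset.mem_singleton_self x
      rw [Finset.mem_sdiff] at hxρ
      refine ⟨x, Finset.mem_sdiff.mpr ⟨h2 hxρ.1, hxρ.2⟩, ?_⟩
      apply Finset.eq_of_subset_of_card_le
      · exact Finset.insert_subset hxρ.1 h1
      · rw [Finset.card_insert_of_notMem hxρ.2]; omega
    · rintro ⟨x, hx, rfl⟩
      rw [Finset.mem_sdiff] at hx
      refine ⟨Finset.subset_insert _ _, Finset.insert_subset hx.1 hsub,
        by rw [Finset.card_insert_of_notMem hx.2]⟩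
  rw [himg, Finset.card_image_of_injOn, Finset.card_sdiff_of_subset hsub]
  · omega
  · intro x hx y hy hxy
    rw [Finset.mem_coe, Finset.mem_sdiff] at hx hy
    simp only [] at hxy
    have : x ∈ insert y σ := by rw [← hxy]; exact Finset.mem_insert_self x σ
    rcases Finset.mem_insert.mp this with h | h
    · exact h
    · exact absurd h hx.2

lemma bd_bd (τ : Finset V) : chainSum (bd τ) bd = ∅ := by
  ext μ
  simp only [Finset.notMem_empty, iff_false]
  rw [mem_chainSum]
  suffices h : ((bd τ).filter fun ρ => μ ∈ bd ρ).card % 2 = 0 by omega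
  by_cases hcond : μ ⊆ τ ∧ μ.Nonempty ∧ μ.card + 2 = τ.card
  · rw [interval_card hcond.1 hcond.2.2 (S := (bd τ).filter fun ρ => μ ∈ bd ρ) ?_]
    intro ρ
    rw [Finset.mem_filter, mem_bd, mem_bd]
    constructor
    · rintro ⟨⟨h1, _, h3⟩, h4, _, h6⟩
      exact ⟨h4, h1, by omega⟩
    · rintro ⟨h1, h2, h3⟩
      exact ⟨⟨h2, hcond.2.1.mono h1, by omega⟩, h1, hcond.2.1, by omega⟩
  · have : (bd τ).filter (fun ρ => μ ∈ bd ρ) = ∅ := by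
      rw [Finset.eq_empty_iff_forall_notMem]
      intro ρ hρ
      rw [Finset.mem_filter, mem_bd, mem_bd] at hρ
      obtain ⟨⟨h1, _, h3⟩, h4, h5, h6⟩ := hρ
      exact hcond ⟨h4.trans h1, h5, by omega⟩
    rw [this]; rfl

lemma cobd_cobd {K : Finset (Finset V)} (hK : IsComplex K) (σ : Finset V) :
    chainSum (cobd K σ) (cobd K) = ∅ := by
  ext μ
  simp only [Finset.notMem_empty, iff_false]
  rw [mem_chainSum]
  suffices h : ((cobd K σ).filter fun ρ => μ ∈ cobd K ρ).card % 2 = 0 by omega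
  by_cases hcond : μ ∈ K ∧ σ ⊆ μ ∧ σ.card + 2 = μ.card
  · rw [interval_card hcond.2.1 hcond.2.2 (S := (cobd K σ).filter fun ρ => μ ∈ cobd K ρ) ?_]
    intro ρ
    rw [Finset.mem_filter, mem_cobd, mem_cobd]
    constructor
    · rintro ⟨⟨_, h2, h3⟩, _, h5, _⟩
      exact ⟨h2, h5, h3⟩
    · rintro ⟨h1, h2, h3⟩
      have hρne : ρ.Nonempty := Finset.card_pos.mp (by omega)
      have hρK : ρ ∈ K := (hK μ hcond.1).2 ρ h2 hρne
      exact ⟨⟨hρK, h1, h3⟩, hcond.1, h2, by omega⟩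
  · have : (cobd K σ).filter (fun ρ => μ ∈ cobd K ρ) = ∅ := by
      rw [Finset.eq_empty_iff_forall_notMem]
      intro ρ hρ
      rw [Finset.mem_filter, mem_cobd, mem_cobd] at hρ
      obtain ⟨⟨_, h2, h3⟩, h4, h5, h6⟩ := hρ
      exact hcond ⟨h4, h2.trans h5, by omega⟩
    rw [this]; rfl

end ChainSumLemmas

section MorseSeqLemmas

lemma MorseSeq.sub_step (W : MorseSeq V) (i : ℕ) (h1 : 1 ≤ i) (h2 : i ≤ W.k) :
    W.seq (i - 1) ⊆ W.seq i := by
  rcases W.step i h1 h2 with ⟨σ, τ, _, h⟩ | ⟨ν, _, h⟩ <;> rw [h] <;> exact Finset.sdiff_subset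

lemma MorseSeq.mono (W : MorseSeq V) {i j : ℕ} (hij : i ≤ j) (hj : j ≤ W.k) :
    W.seq i ⊆ W.seq j := by
  induction j with
  | zero => rw [Nat.le_zero.mp hij]
  | succ n ih =>
    rcases Nat.lt_or_ge i (n + 1) with h | h
    · have hsub := ih (Nat.lt_succ_iff.mp h) (le_trans (Nat.le_succ n) hj)
      exact hsub.trans (by simpa using W.sub_step (n + 1) (Nat.succ_le_succ (Nat.zero_le n)) hj)
    · rw [Nat.le_antisymm hij h]

/-- The step at which a face is added. -/
noncomputable def MorseSeq.birth (W : MorseSeq V) (σ : Finset V) : ℕ :=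
  sInf {i | σ ∈ W.seq i}

lemma MorseSeq.mem_seq_birth (W : MorseSeq V) {σ : Finset V} (h : σ ∈ W.cplx) :
    σ ∈ W.seq (W.birth σ) := by
  have hmem : sInf {i | σ ∈ W.seq i} ∈ {i | σ ∈ W.seq i} :=
    Nat.sInf_mem ⟨W.k, (h : σ ∈ W.seq W.k)⟩
  exact hmem

lemma MorseSeq.birth_le (W : MorseSeq V) {σ : Finset V} {i : ℕ} (h : σ ∈ W.seq i) :
    W.birth σ ≤ i :=
  Nat.sInf_le h

lemma MorseSeq.one_le_birth (W : MorseSeq V) {σ : Finset V} (h : σ ∈ W.cplx) :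
    1 ≤ W.birth σ := by
  by_contra hb
  have hb0 : W.birth σ = 0 := by omega
  have := W.mem_seq_birth h
  rw [hb0, W.init] at this
  exact absurd this (Finset.notMem_empty σ)

lemma MorseSeq.not_mem_pred_birth (W : MorseSeq V) {σ : Finset V} (h : σ ∈ W.cplx) :
    σ ∉ W.seq (W.birth σ - 1) := by
  intro hmem
  have h1 := W.one_le_birth h
  have := W.birth_le hmem
  omega

/-- In an expansion step, the lower face has codimension one in the upper face. -/
lemma codim_one_of_free {K : Finset (Finset V)} (hK : IsComplex K) {σ τ : Finset V}
    (hfree : IsFreePair K σ τ) : σ.card + 1 = τ.card := by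
  obtain ⟨hσK, hτK, hst, huniq⟩ := hfree
  obtain ⟨x, hxτ, hxσ⟩ := Finset.exists_of_ssubset hst
  have hρτ : insert x σ ⊆ τ := Finset.insert_subset hxτ hst.subset
  have hρK : insert x σ ∈ K := (hK τ hτK).2 _ hρτ (Finset.insert_nonempty x σ)
  have := huniq _ hρK (Finset.ssubset_insert hxσ)
  rw [← this, Finset.card_insert_of_notMem hxσ]

end MorseSeqLemmas

section Pointwise

/-- The reference map is a chain map, pointwise on the simplices of `K`. -/
lemma ref_pointwise (W : MorseSeq V) (Λ : Finset V → Finset (Finset V)) (hΛ : IsRefMap W Λ) :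
    ∀ σ ∈ W.cplx, chainSum (Λ σ) (fun ν => chainSum (bd ν) Λ) = chainSum (bd σ) Λ := by
  suffices H : ∀ n σ, σ ∈ W.cplx → W.birth σ ≤ n →
      chainSum (Λ σ) (fun ν => chainSum (bd ν) Λ) = chainSum (bd σ) Λ by
    exact fun σ hσ => H (W.birth σ) σ hσ le_rfl
  intro n
  induction n using Nat.strong_induction_on with
  | _ n ih =>
  intro σ hσK hbn
  set i := W.birth σ with hi
  have h1 : 1 ≤ i := W.one_le_birth hσK
  have h2 : i ≤ W.k := W.birth_le hσK
  have hσi : σ ∈ W.seq i := W.mem_seq_birth hσK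
  have hσpred : σ ∉ W.seq (i - 1) := W.not_mem_pred_birth hσK
  rcases W.step i h1 h2 with ⟨σ₀, τ, hfree, heq⟩ | ⟨ν, hfacet, heq⟩
  · -- expansion step
    have hdiff : W.seq i \ W.seq (i - 1) = {σ₀, τ} := by
      rw [heq, Finset.sdiff_sdiff_self_left, Finset.inter_eq_right.mpr ?_]
      intro ρ hρ
      rcases Finset.mem_insert.mp hρ with h | h
      · rw [h]; exact hfree.1
      · rw [Finset.mem_singleton.mp h]; exact hfree.2.1
    have hreg : W.Regular σ₀ τ := ⟨i, h1, h2, hfree.2.2.1, hdiff⟩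
    have hup := hΛ.2.2 τ ⟨σ₀, hreg⟩
    have hσmem : σ ∈ ({σ₀, τ} : Finset (Finset V)) := by
      rw [← hdiff]; exact Finset.mem_sdiff.mpr ⟨hσi, hσpred⟩
    have hcodim : σ₀.card + 1 = τ.card := codim_one_of_free (W.cpx i h2) hfree
    rcases Finset.mem_insert.mp hσmem with h | h
    · -- σ = σ₀, the lower regular face
      subst h
      have hσ₀bd : σ ∈ bd τ :=
        mem_bd.mpr ⟨hfree.2.2.1.subset, ((W.cpx i h2) σ hfree.1).1, hcodim⟩
      have hΛσ : Λ σ = chainSum ((bd τ).erase σ) Λ := chainSum_erase hσ₀bd hup.2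
      rw [hΛσ, chainSum_chainSum]
      have hIH : ∀ σ' ∈ (bd τ).erase σ,
          chainSum (Λ σ') (fun ν => chainSum (bd ν) Λ) = chainSum (bd σ') Λ := by
        intro σ' hσ'
        obtain ⟨hne, hσ'bd⟩ := Finset.mem_erase.mp hσ'
        rw [mem_bd] at hσ'bd
        have hσ'i : σ' ∈ W.seq i := ((W.cpx i h2) τ hfree.2.1).2 σ' hσ'bd.1 hσ'bd.2.1
        have hσ'ne_τ : σ' ≠ τ := fun hh => by rw [hh] at hσ'bd; omega
        have hσ'pred : σ' ∈ W.seq (i - 1) := by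
          rw [heq, Finset.mem_sdiff]
          refine ⟨hσ'i, fun hmem => ?_⟩
          rcases Finset.mem_insert.mp hmem with hh | hh
          · exact hne hh
          · exact hσ'ne_τ (Finset.mem_singleton.mp hh)
        have hσ'K : σ' ∈ W.cplx :=
          W.mono (by omega : i - 1 ≤ W.k) le_rfl hσ'pred
        exact ih (i - 1) (by omega) σ' hσ'K (W.birth_le hσ'pred)
      rw [chainSum_congr hIH]
      have hbdg : chainSum (bd τ) (fun x => chainSum (bd x) Λ) = ∅ := by
        rw [← chainSum_chainSum, bd_bd, chainSum_empty]
      exact (chainSum_erase hσ₀bd hbdg).symm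
    · -- σ = τ, the upper regular face
      rw [Finset.mem_singleton.mp h, hup.1, hup.2, chainSum_empty]
  · -- filling step: σ = ν is critical
    have hσν : σ = ν := by
      rw [heq, Finset.mem_sdiff, not_and, not_not] at hσpred
      exact Finset.mem_singleton.mp (hσpred hσi)
    subst hσν
    have hcrit : W.Critical σ := by
      refine ⟨i, h1, h2, ?_⟩
      rw [heq, Finset.sdiff_sdiff_self_left,
        Finset.inter_eq_right.mpr (Finset.singleton_subset_iff.mpr hσi)]
    rw [hΛ.2.1 σ hcrit, chainSum_singleton]

/-- The coreference map is a cochain map, pointwise on the simplices of `K`. -/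
lemma coref_pointwise (W : MorseSeq V) (Vee : Finset V → Finset (Finset V))
    (hV : IsCorefMap W Vee) :
    ∀ σ ∈ W.cplx, chainSum (Vee σ) (fun ν => chainSum (cobd W.cplx ν) Vee)
      = chainSum (cobd W.cplx σ) Vee := by
  suffices H : ∀ n σ, σ ∈ W.cplx → W.k - W.birth σ ≤ n →
      chainSum (Vee σ) (fun ν => chainSum (cobd W.cplx ν) Vee)
        = chainSum (cobd W.cplx σ) Vee by
    exact fun σ hσ => H (W.k - W.birth σ) σ hσ le_rfl
  intro n
  induction n using Nat.strong_induction_on with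
  | _ n ih =>
  intro σ hσK hbn
  set i := W.birth σ with hi
  have h1 : 1 ≤ i := W.one_le_birth hσK
  have h2 : i ≤ W.k := W.birth_le hσK
  have hσi : σ ∈ W.seq i := W.mem_seq_birth hσK
  have hσpred : σ ∉ W.seq (i - 1) := W.not_mem_pred_birth hσK
  rcases W.step i h1 h2 with ⟨σ₀, τ, hfree, heq⟩ | ⟨ν, hfacet, heq⟩
  · -- expansion step
    have hdiff : W.seq i \ W.seq (i - 1) = {σ₀, τ} := by
      rw [heq, Finset.sdiff_sdiff_self_left, Finset.inter_eq_right.mpr ?_]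
      intro ρ hρ
      rcases Finset.mem_insert.mp hρ with h | h
      · rw [h]; exact hfree.1
      · rw [Finset.mem_singleton.mp h]; exact hfree.2.1
    have hreg : W.Regular σ₀ τ := ⟨i, h1, h2, hfree.2.2.1, hdiff⟩
    have hlow := hV.2.2 σ₀ ⟨τ, hreg⟩
    have hσmem : σ ∈ ({σ₀, τ} : Finset (Finset V)) := by
      rw [← hdiff]; exact Finset.mem_sdiff.mpr ⟨hσi, hσpred⟩
    have hcodim : σ₀.card + 1 = τ.card := codim_one_of_free (W.cpx i h2) hfree
    rcases Finset.mem_insert.mp hσmem with h | h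
    · -- σ = σ₀, the lower regular face
      rw [h, hlow.1, hlow.2, chainSum_empty]
    · -- σ = τ, the upper regular face
      rw [Finset.mem_singleton.mp h] at hσi hσpred ⊢
      have hτK : τ ∈ W.cplx := W.mono h2 le_rfl hσi
      have hbirthτ : W.birth τ = i := by
        have hle : W.birth τ ≤ i := W.birth_le hσi
        by_contra hne
        have hlt : W.birth τ ≤ i - 1 := by omega
        exact hσpred (W.mono hlt (by omega) (W.mem_seq_birth hτK))
      have hτcobd : τ ∈ cobd W.cplx σ₀ := mem_cobd.mpr ⟨hτK, hfree.2.2.1.subset, hcodim⟩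
      have hVτ : Vee τ = chainSum ((cobd W.cplx σ₀).erase τ) Vee :=
        chainSum_erase hτcobd hlow.2
      rw [hVτ, chainSum_chainSum]
      have hIH : ∀ ρ ∈ (cobd W.cplx σ₀).erase τ,
          chainSum (Vee ρ) (fun ν => chainSum (cobd W.cplx ν) Vee)
            = chainSum (cobd W.cplx ρ) Vee := by
        intro ρ hρ
        obtain ⟨hne, hρcobd⟩ := Finset.mem_erase.mp hρ
        rw [mem_cobd] at hρcobd
        have hρK : ρ ∈ W.cplx := hρcobd.1
        have hσ₀ρ : σ₀ ⊂ ρ := by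
          refine Finset.ssubset_iff_of_subset hρcobd.2.1 |>.mpr ?_
          by_contra hc
          push_neg at hc
          have : ρ ⊆ σ₀ := fun x hx => by
            by_contra hxσ
            exact hxσ (hc x hx)
          have : ρ.card ≤ σ₀.card := Finset.card_le_card this
          omega
        have hρnoti : ρ ∉ W.seq i := fun hmem => hne (hfree.2.2.2 ρ hmem hσ₀ρ)
        have hbρ : i < W.birth ρ := by
          by_contra hc
          push_neg at hc
          exact hρnoti (W.mono hc h2 (W.mem_seq_birth hρK))
        have hbρk : W.birth ρ ≤ W.k := W.birth_le hρK
        exact ih (W.k - W.birth ρ) (by omega) ρ hρK le_rfl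
      rw [chainSum_congr hIH]
      have hcobdg : chainSum (cobd W.cplx σ₀)
          (fun x => chainSum (cobd W.cplx x) Vee) = ∅ := by
        have hKc : IsComplex W.cplx := W.cpx W.k le_rfl
        rw [← chainSum_chainSum, cobd_cobd hKc, chainSum_empty]
      exact (chainSum_erase hτcobd hcobdg).symm
  · -- filling step: σ = ν is critical
    have hσν : σ = ν := by
      rw [heq, Finset.mem_sdiff, not_and, not_not] at hσpred
      exact Finset.mem_singleton.mp (hσpred hσi)
    subst hσν
    have hcrit : W.Critical σ := by
      refine ⟨i, h1, h2, ?_⟩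
      rw [heq, Finset.sdiff_sdiff_self_left,
        Finset.inter_eq_right.mpr (Finset.singleton_subset_iff.mpr hσi)]
    rw [hV.2.1 σ hcrit, chainSum_singleton]

end Pointwise

/-- `∂̂_p ∘ ∧_p = ∧_{p-1} ∘ ∂_p` and `δ̂_p ∘ ∨_p = ∨_{p+1} ∘ δ_p` :
the reference map is a chain map and the coreference map is a cochain map. -/
theorem reference_chain_map_coreference_cochain_map (W : MorseSeq V)
    (Λ Vee : Finset V → Finset (Finset V))
    (hΛ : IsRefMap W Λ) (hV : IsCorefMap W Vee)
    (p : ℕ) (c : Finset (Finset V)) (hc : IsChainOf W.cplx p c) :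
    chainSum (chainSum c Λ) (fun ν => chainSum (bd ν) Λ) = chainSum (chainSum c bd) Λ ∧
    chainSum (chainSum c Vee) (fun ν => chainSum (cobd W.cplx ν) Vee) =
      chainSum (chainSum c (cobd W.cplx)) Vee := by
  constructor
  · rw [chainSum_chainSum, chainSum_chainSum]
    exact chainSum_congr fun σ hσ => ref_pointwise W Λ hΛ σ (hc σ hσ).1
  · rw [chainSum_chainSum, chainSum_chainSum]
    exact chainSum_congr fun σ hσ => coref_pointwise W Vee hV σ (hc σ hσ).1
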